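/- Let E, A ∈ ℂ^{n×n}, B ∈ ℂ^{n×m}, let X = X^H ∈ ℂ^{n×n} be Hermitian, and let z ∈ ℂ be such that zE − A is invertible. Then, writing R := (zE − A)^{-1}, the identity [R B; I_m]^H · [[−A^H X A + E^H X E, −A^H X B], [−B^H X A, −B^H X B]] · [R B; I_m] = (1 − |z|²) B^H R^H E^H X E R B holds, where [R B; I_m] denotes the (n+m)×m matrix obtained by stacking R B on top of I_m. -/

import Mathlib

open Matrix

lemma kyp_aux (n m : ℕ) (E A X : Matrix (Fin n) (Fin n) ℂ)
    (B u : Matrix (Fin n) (Fin m) ℂ) :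
    uᴴ * ((-(Aᴴ * X * A) + Eᴴ * X * E)) * u + uᴴ * (-(Aᴴ * X * B))
      + ((-(Bᴴ * X * A)) * u + (-(Bᴴ * X * B)))
    = (E * u)ᴴ * X * (E * u) - (A * u + B)ᴴ * X * (A * u + B) := by
  simp only [Matrix.conjTranspose_add, Matrix.conjTranspose_mul, Matrix.add_mul,
    Matrix.mul_add, Matrix.neg_mul, Matrix.mul_neg, Matrix.mul_assoc, sub_eq_add_neg,
    neg_add, neg_neg]
  abel

/-- The key algebraic identity behind the KYP / positive realness analysis:
for Hermitian `X` and invertible `zE - A`, with `R = (zE - A)⁻¹`,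
`[RB; I]ᴴ · [[-AᴴXA + EᴴXE, -AᴴXB], [-BᴴXA, -BᴴXB]] · [RB; I]
  = (1 - |z|²) · Bᴴ Rᴴ Eᴴ X E R B`. -/
theorem kyp_resolvent_identity
    (n m : ℕ)
    (E A X : Matrix (Fin n) (Fin n) ℂ)
    (B : Matrix (Fin n) (Fin m) ℂ)
    (hX : X.IsHermitian)
    (z : ℂ) (hz : IsUnit (z • E - A)) :
    (Matrix.fromRows ((z • E - A)⁻¹ * B) (1 : Matrix (Fin m) (Fin m) ℂ))ᴴ
      * (Matrix.fromBlocks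
          (-(Aᴴ * X * A) + Eᴴ * X * E) (-(Aᴴ * X * B))
          (-(Bᴴ * X * A)) (-(Bᴴ * X * B)))
      * (Matrix.fromRows ((z • E - A)⁻¹ * B) (1 : Matrix (Fin m) (Fin m) ℂ))
    = (1 - ((‖z‖ : ℝ) : ℂ) ^ 2) •
        (Bᴴ * ((z • E - A)⁻¹)ᴴ * Eᴴ * X * E * (z • E - A)⁻¹ * B) := by
  set R := (z • E - A)⁻¹ with hR
  set u := R * B with hu
  have hinv : (z • E - A) * R = 1 :=
    Matrix.mul_nonsing_inv _ ((Matrix.isUnit_iff_isUnit_det _).mp hz)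
  have hAu : A * u + B = z • (E * u) := by
    have h2 : z • (E * u) - A * u = B := by
      rw [← Matrix.smul_mul, ← Matrix.sub_mul, hu, ← Matrix.mul_assoc, hinv, Matrix.one_mul]
    linear_combination (norm := abel) h2.symm
  have hblocks :
      (Matrix.fromRows u (1 : Matrix (Fin m) (Fin m) ℂ))ᴴ
        * (Matrix.fromBlocks
            (-(Aᴴ * X * A) + Eᴴ * X * E) (-(Aᴴ * X * B))
            (-(Bᴴ * X * A)) (-(Bᴴ * X * B)))
        * (Matrix.fromRows u (1 : Matrix (Fin m) (Fin m) ℂ))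
      = uᴴ * ((-(Aᴴ * X * A) + Eᴴ * X * E)) * u + uᴴ * (-(Aᴴ * X * B))
        + ((-(Bᴴ * X * A)) * u + (-(Bᴴ * X * B))) := by
    rw [Matrix.conjTranspose_fromRows_eq_fromCols_conjTranspose,
      Matrix.fromCols_mul_fromBlocks, Matrix.fromCols_mul_fromRows]
    simp [Matrix.mul_add, Matrix.add_mul, Matrix.mul_assoc]
    abel
  rw [hblocks, kyp_aux, hAu]
  have habs : star z * z = ((‖z‖ : ℝ) : ℂ) ^ 2 := by
    rw [Complex.star_def, mul_comm, Complex.mul_conj]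
    exact_mod_cast (Complex.sq_norm z).symm
  have hEu : (E * u)ᴴ * X * (E * u) = Bᴴ * Rᴴ * Eᴴ * X * E * R * B := by
    simp [hu, Matrix.conjTranspose_mul, Matrix.mul_assoc]
  rw [Matrix.conjTranspose_smul, Matrix.smul_mul, Matrix.smul_mul, Matrix.mul_smul,
    smul_smul, habs, hEu, sub_smul, one_smul]
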